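/- Let B ⊆ A be a regular inclusion of C*-algebras, N a *-semigroup of normalizers of B with dense span in A, and E : A → B a faithful N-invariant conditional expectation. If K is an N-invariant closed ideal of B, then J_K := {a ∈ A : E(a*a) ∈ K} is a closed two-sided ideal of A with J_K ∩ B = K. -/

import Mathlib

/-- Two-sided annihilator of a subset of an algebra. -/
def ann {A : Type*} [NonUnitalNonAssocSemiring A] (X : Set A) : Set A :=
  {a | ∀ x ∈ X, a * x = 0 ∧ x * a = 0}

/-- A (not necessarily closed) two-sided ideal, as a subset. -/
def IsAlgIdeal {A : Type*} [NonUnitalNonAssocSemiring A] (J : Set A) : Prop :=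
  (0 : A) ∈ J ∧ (∀ x ∈ J, ∀ y ∈ J, x + y ∈ J) ∧ ∀ a : A, ∀ x ∈ J, a * x ∈ J ∧ x * a ∈ J

/-- A closed two-sided ideal. -/
def IsIdeal {A : Type*} [NonUnitalNormedRing A] (J : Set A) : Prop :=
  IsAlgIdeal J ∧ IsClosed J

/-- A regular ideal: a closed two-sided ideal equal to its double annihilator. -/
def IsRegularIdeal {A : Type*} [NonUnitalNormedRing A] (J : Set A) : Prop :=
  IsIdeal J ∧ J = ann (ann J)

variable {A : Type*} [NonUnitalNormedRing A] [StarRing A] [CStarRing A] [CompleteSpace A]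
  [NormedSpace ℂ A] [IsScalarTower ℂ A A] [SMulCommClass ℂ A A] [StarModule ℂ A]
  [PartialOrder A] [StarOrderedRing A]

/-- `B` is a (non-unital, closed, star-closed) C*-subalgebra of `A`. -/
def IsCStarSubalgebra (B : Set A) : Prop :=
  (0 : A) ∈ B ∧ (∀ x ∈ B, ∀ y ∈ B, x + y ∈ B) ∧ (∀ x ∈ B, ∀ y ∈ B, x * y ∈ B) ∧
  (∀ (c : ℂ), ∀ x ∈ B, c • x ∈ B) ∧ (∀ x ∈ B, star x ∈ B) ∧ IsClosed B

/-- `B` contains an approximate unit for `A`. -/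
def ContainsApproxUnit (B : Set A) : Prop :=
  ∀ a : A, ∀ ε > (0 : ℝ), ∃ b ∈ B, ‖b‖ ≤ 1 ∧ ‖a - b * a‖ < ε ∧ ‖a - a * b‖ < ε

/-- `B ⊆ A` is an inclusion of C*-algebras: a C*-subalgebra containing an
approximate unit for `A`. -/
def IsCStarInclusion (B : Set A) : Prop :=
  IsCStarSubalgebra B ∧ ContainsApproxUnit B

/-- `n` is a normalizer of `B` in `A`: `nBn* ⊆ B` and `n*Bn ⊆ B`. -/
def IsNormalizer (B : Set A) (n : A) : Prop :=
  (∀ b ∈ B, n * b * star n ∈ B) ∧ (∀ b ∈ B, star n * b * n ∈ B)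

/-- `B ⊆ A` is a regular inclusion: an inclusion whose normalizers span a dense
subspace of `A`. -/
def IsRegularInclusion (B : Set A) : Prop :=
  IsCStarInclusion B ∧
  closure (Submodule.span ℂ {n | IsNormalizer B n} : Set A) = Set.univ

/-- `E : A → A` is a conditional expectation onto `B`. -/
def IsCondExp (B : Set A) (E : A → A) : Prop :=
  (∀ a, E a ∈ B) ∧ (∀ b ∈ B, E b = b) ∧
  (∀ x y, E (x + y) = E x + E y) ∧ (∀ (c : ℂ) (x : A), E (c • x) = c • E x) ∧
  (∀ a : A, 0 ≤ a → 0 ≤ E a) ∧ (∀ a, ‖E a‖ ≤ ‖a‖) ∧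
  (∀ b ∈ B, ∀ a, E (b * a) = b * E a ∧ E (a * b) = E a * b)

/-- Faithfulness of a positive map: `E(a*a) = 0 → a = 0`. -/
def IsFaithful (E : A → A) : Prop := ∀ a, E (star a * a) = 0 → a = 0

/-- `N` is a `*`-semigroup of normalizers of `B` with dense linear span in `A`. -/
def IsNormalizerSemigroup (B N : Set A) : Prop :=
  (∀ n ∈ N, IsNormalizer B n) ∧ (∀ n ∈ N, star n ∈ N) ∧
  (∀ m ∈ N, ∀ n ∈ N, m * n ∈ N) ∧
  closure (Submodule.span ℂ N : Set A) = Set.univ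

/-- `K` is invariant under `N`: `nKn* ⊆ K` for all `n ∈ N`. -/
def InvariantUnder (N K : Set A) : Prop := ∀ n ∈ N, ∀ k ∈ K, n * k * star n ∈ K

/-- `E` is `N`-invariant: `E(nan*) = nE(a)n*` for all `n ∈ N`. -/
def IsInvariantCondExp (N : Set A) (E : A → A) : Prop :=
  ∀ n ∈ N, ∀ a : A, E (n * a * star n) = n * E a * star n

/-- A closed two-sided ideal of the subalgebra `B`. -/
def IsIdealIn (B K : Set A) : Prop :=
  K ⊆ B ∧ (0 : A) ∈ K ∧ (∀ x ∈ K, ∀ y ∈ K, x + y ∈ K) ∧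
  (∀ b ∈ B, ∀ x ∈ K, b * x ∈ K ∧ x * b ∈ K) ∧ IsClosed K

/-- A regular ideal of the subalgebra `B`: `K = K^{⊥_B ⊥_B}` with annihilators
computed inside `B`. -/
def IsRegularIdealIn (B K : Set A) : Prop :=
  IsIdealIn B K ∧ K = ann (ann K ∩ B) ∩ B

/-- `B ⊆ A` has the ideal intersection property. -/
def HasIIP (B : Set A) : Prop :=
  ∀ J : Set A, IsIdeal J → J ≠ {0} → ∃ x ∈ J ∩ B, x ≠ 0

/-- `B ⊆ A` has the regular ideal intersection property. -/
def HasRIIP (B : Set A) : Prop :=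
  ∀ J : Set A, IsRegularIdeal J → J ≠ {0} → ∃ x ∈ J ∩ B, x ≠ 0

set_option linter.unusedSectionVars false

noncomputable instance : NonUnitalCStarAlgebra A := {}

/-- nonneg real smul preserves positivity in a star-ordered complex module ring -/
lemma rsmul_nonneg {R : Type*} [NonUnitalRing R] [Module ℂ R] [StarRing R] [StarModule ℂ R]
    [IsScalarTower ℂ R R] [SMulCommClass ℂ R R] [PartialOrder R] [StarOrderedRing R]
    {r : ℝ} (hr : 0 ≤ r) {a : R} (ha : 0 ≤ a) : 0 ≤ r • a := by
  rw [StarOrderedRing.nonneg_iff] at ha ⊢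
  induction ha using AddSubmonoid.closure_induction with
  | mem x hx =>
    obtain ⟨s, rfl⟩ := hx
    refine AddSubmonoid.subset_closure ⟨(Real.sqrt r : ℂ) • s, ?_⟩
    show star ((Real.sqrt r : ℂ) • s) * ((Real.sqrt r : ℂ) • s) = r • (star s * s)
    rw [star_smul, smul_mul_smul_comm, ← Complex.coe_smul]
    congr 1
    rw [Complex.star_def, Complex.conj_ofReal, ← Complex.ofReal_mul,
      Real.mul_self_sqrt hr]
  | zero => simpa using AddSubmonoid.zero_mem _
  | add x y _ _ hx hy => rw [smul_add]; exact AddSubmonoid.add_mem _ hx hy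

lemma real_poly_bound {t : ℝ} (h0 : 0 ≤ t) (h1 : t ≤ 1) {m : ℕ} (hm : 1 ≤ m) :
    t ^ m * (1 - t) ≤ 1 / m := by
  set r : ℝ := 1 - t with hr
  have hr0 : 0 ≤ r := by simp [hr]; linarith
  have ht : t = 1 - r := by rw [hr]; ring
  have hb : 1 + (m : ℝ) * r ≤ (1 + r) ^ m := one_add_mul_le_pow (by linarith) m
  have hp0 : (0:ℝ) ≤ (1 - r) ^ m := by rw [← ht]; positivity
  have key : t ^ m * (1 - t) * m ≤ 1 := by
    calc t ^ m * (1 - t) * m = (1 - r) ^ m * ((m : ℝ) * r) := by rw [ht]; ring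
      _ ≤ (1 - r) ^ m * (1 + m * r) := by
          apply mul_le_mul_of_nonneg_left (by linarith) hp0
      _ ≤ (1 - r) ^ m * (1 + r) ^ m := mul_le_mul_of_nonneg_left hb hp0
      _ = (1 - r ^ 2) ^ m := by rw [← mul_pow]; ring_nf
      _ ≤ 1 := by
          apply pow_le_one₀ (by nlinarith) (by nlinarith)
  have hmpos : (0:ℝ) < m := by exact_mod_cast hm
  rw [le_div_iff₀ hmpos]
  exact key

lemma K_smul {B K : Set A} (hBsm : ∀ (c : ℂ), ∀ x ∈ B, c • x ∈ B)
    (hAU : ContainsApproxUnit B) (hK : IsIdealIn B K)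
    (c : ℂ) {k : A} (hk : k ∈ K) : c • k ∈ K := by
  obtain ⟨hKB, hK0, hKadd, hKmul, hKcl⟩ := hK
  rcases eq_or_ne c 0 with rfl | hc
  · simpa using hK0
  have hcpos : (0:ℝ) < ‖c‖ := by simpa using hc
  rw [← hKcl.closure_eq]
  rw [Metric.mem_closure_iff]
  intro ε hε
  obtain ⟨b, hbB, -, hb1, -⟩ := hAU k (ε / ‖c‖) (by positivity)
  refine ⟨(c • b) * k, (hKmul _ (hBsm c b hbB) k hk).1, ?_⟩
  rw [dist_eq_norm, smul_mul_assoc, ← smul_sub, norm_smul]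
  calc ‖c‖ * ‖k - b * k‖ < ‖c‖ * (ε / ‖c‖) := by
        exact mul_lt_mul_of_pos_left hb1 hcpos
    _ = ε := mul_div_cancel₀ ε hcpos.ne'

lemma K_smul_real {B K : Set A} (hBsm : ∀ (c : ℂ), ∀ x ∈ B, c • x ∈ B)
    (hAU : ContainsApproxUnit B) (hK : IsIdealIn B K)
    (r : ℝ) {k : A} (hk : k ∈ K) : r • k ∈ K := by
  rw [← Complex.coe_smul]; exact K_smul hBsm hAU hK _ hk
set_option linter.unusedSectionVars false

open Unitization in
lemma key_approx {B K : Set A} (hBsm : ∀ (c : ℂ), ∀ x ∈ B, c • x ∈ B)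
    (hAU : ContainsApproxUnit B) (hK : IsIdealIn B K)
    {y z : A} (hyK : y ∈ K) (hy0 : 0 ≤ y) (hz : star z * z ≤ y)
    {S : Set A} (hS : ∀ k ∈ K, z * k ∈ S) (hScl : IsClosed S) : z ∈ S := by
  obtain ⟨hKB, hK0, hKadd, hKmul, hKcl⟩ := hK
  obtain ⟨M, hM⟩ : ∃ M : ℝ, M = ‖y‖ + 1 := ⟨_, rfl⟩
  have hMpos : 0 < M := by rw [hM]; positivity
  obtain ⟨cy, hcy⟩ : ∃ cy : A, cy = M⁻¹ • y := ⟨_, rfl⟩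
  have hcyK : cy ∈ K := hcy ▸ K_smul_real hBsm hAU ⟨hKB, hK0, hKadd, hKmul, hKcl⟩ _ hyK
  have hcy0 : 0 ≤ cy := hcy ▸ rsmul_nonneg (by positivity) hy0
  have hysa : IsSelfAdjoint y := .of_nonneg hy0
  have hcysa : IsSelfAdjoint cy := .of_nonneg hcy0
  -- the sequence kseq m ∈ K with (kseq m : Unitization ℂ A) = 1 - u ^ m
  obtain ⟨kseq, hk0, hksucc⟩ :
      ∃ k : ℕ → A, k 0 = 0 ∧ ∀ m, k (m + 1) = cy + k m - k m * cy :=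
    ⟨fun m => Nat.rec 0 (fun _ km => cy + km - km * cy) m, rfl, fun m => rfl⟩
  have hkK : ∀ m, kseq m ∈ K := by
    intro m
    induction m with
    | zero => rw [hk0]; exact hK0
    | succ m ih =>
      rw [hksucc, sub_eq_add_neg, ← neg_one_smul ℂ (kseq m * cy)]
      exact hKadd _ (hKadd _ hcyK _ ih) _
        (K_smul hBsm hAU ⟨hKB, hK0, hKadd, hKmul, hKcl⟩ (-1) ((hKmul cy (hKB hcyK) _ ih).2))
  obtain ⟨u, hu⟩ : ∃ u : Unitization ℂ A, u = 1 - (cy : Unitization ℂ A) := ⟨_, rfl⟩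
  have hku : ∀ m, ((kseq m : Unitization ℂ A)) = 1 - u ^ m := by
    intro m
    induction m with
    | zero => simp [hk0]
    | succ m ih =>
      rw [hksucc, pow_succ, inr_sub ℂ, inr_add ℂ, inr_mul ℂ, ih, hu]
      noncomm_ring
  have husa : IsSelfAdjoint u :=
    hu ▸ (IsSelfAdjoint.one (R := Unitization ℂ A)).sub (hcysa.inr ℂ)
  have hone : (0 : Unitization ℂ A) ≤ 1 := by simpa using star_mul_self_nonneg (1 : Unitization ℂ A)
  have hcyu1 : (cy : Unitization ℂ A) ≤ 1 := by
    have h1 : (0:ℝ) ≤ 1 - ‖(cy : Unitization ℂ A)‖ := by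
      rw [Unitization.norm_inr, hcy, norm_smul, Real.norm_eq_abs,
        abs_of_pos (by positivity)]
      rw [sub_nonneg, inv_mul_le_iff₀ hMpos, hM]
      nlinarith [norm_nonneg y]
    calc (cy : Unitization ℂ A) ≤ algebraMap ℝ _ ‖(cy : Unitization ℂ A)‖ :=
          (hcysa.inr ℂ).le_algebraMap_norm_self
      _ = ‖(cy : Unitization ℂ A)‖ • 1 := Algebra.algebraMap_eq_smul_one _
      _ ≤ 1 := by
          rw [← sub_nonneg]
          have heq : (1 : Unitization ℂ A) - ‖(cy : Unitization ℂ A)‖ • 1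
              = (1 - ‖(cy : Unitization ℂ A)‖) • 1 := by rw [sub_smul, one_smul]
          rw [heq]
          exact rsmul_nonneg h1 hone
  have hu0 : 0 ≤ u := by rw [hu, sub_nonneg]; exact hcyu1
  have hu1 : u ≤ 1 := by
    rw [hu]
    exact sub_le_self 1 (inr_nonneg_iff.mpr hcy0)
  have hnormu : ‖u‖ ≤ 1 := by
    calc ‖u‖ ≤ ‖(1 : Unitization ℂ A)‖ := CStarAlgebra.norm_le_norm_of_nonneg_of_le hu0 hu1
      _ = 1 := norm_one
  -- the key estimate
  have hest : ∀ m : ℕ, 1 ≤ m → ‖z - z * kseq m‖ ^ 2 ≤ M / (2 * m) := by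
    intro m hm
    have hpowsa : IsSelfAdjoint (u ^ m) := husa.pow m
    have e1 : ‖z - z * kseq m‖ = ‖(z : Unitization ℂ A) * u ^ m‖ := by
      rw [← Unitization.norm_inr (𝕜 := ℂ) (z - z * kseq m)]
      congr 1
      rw [inr_sub ℂ, inr_mul ℂ, hku m]
      noncomm_ring
    have e2 : ‖(z : Unitization ℂ A) * u ^ m‖ ^ 2
        = ‖u ^ m * ((star z * z : A) : Unitization ℂ A) * u ^ m‖ := by
      rw [sq, ← CStarRing.norm_star_mul_self]
      congr 1
      rw [star_mul, hpowsa.star_eq, inr_mul ℂ, inr_star]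
      noncomm_ring
    have e3 : u ^ m * ((star z * z : A) : Unitization ℂ A) * u ^ m
        ≤ u ^ m * ((y : A) : Unitization ℂ A) * u ^ m := by
      have := star_left_conjugate_le_conjugate
        ((inr_le_iff (star z * z) y (IsSelfAdjoint.star_mul_self z) hysa).mpr hz) (u ^ m)
      rwa [hpowsa.star_eq] at this
    have e35 : (0 : Unitization ℂ A) ≤ u ^ m * ((star z * z : A) : Unitization ℂ A) * u ^ m := by
      have := star_left_conjugate_nonneg (inr_nonneg_iff.mpr (star_mul_self_nonneg z)) (u ^ m)
      rwa [hpowsa.star_eq] at this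
    have e4 : u ^ m * ((y : A) : Unitization ℂ A) * u ^ m
        = M • (u ^ (2 * m) - u ^ (2 * m + 1)) := by
      have hyu : ((y : A) : Unitization ℂ A) = M • (1 - u) := by
        rw [hu, sub_sub_cancel, ← Unitization.inr_smul ℂ, hcy, smul_smul,
          mul_inv_cancel₀ hMpos.ne', one_smul]
      rw [hyu, mul_smul_comm, smul_mul_assoc]
      congr 1
      rw [mul_sub, mul_one, sub_mul]
      congr 1
      · rw [← pow_add]
        congr 1
        omega
      · rw [← pow_succ, ← pow_add]
        congr 1
        omega
    have e5 : ‖u ^ (2 * m) - u ^ (2 * m + 1)‖ ≤ 1 / (2 * m) := by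
      have hcfc : u ^ (2 * m) - u ^ (2 * m + 1)
          = cfc (fun t : ℝ => t ^ (2 * m) - t ^ (2 * m + 1)) u := by
        rw [cfc_sub (fun t : ℝ => t ^ (2 * m)) (fun t : ℝ => t ^ (2 * m + 1)) u,
          cfc_pow_id u, cfc_pow_id u]
      rw [hcfc]
      apply norm_cfc_le (one_div_nonneg.mpr (by positivity))
      intro t ht
      have ht0 : 0 ≤ t := spectrum_nonneg_of_nonneg hu0 ht
      have ht1 : t ≤ 1 := by
        have := spectrum.norm_le_norm_of_mem ht
        rw [Real.norm_eq_abs, abs_of_nonneg ht0] at this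
        linarith [hnormu]
      have hb := real_poly_bound ht0 ht1 (m := 2 * m) (by omega)
      have heq : t ^ (2 * m) - t ^ (2 * m + 1) = t ^ (2 * m) * (1 - t) := by ring
      rw [Real.norm_eq_abs, heq, abs_of_nonneg (mul_nonneg (pow_nonneg ht0 _) (by linarith))]
      calc t ^ (2 * m) * (1 - t) ≤ 1 / (2 * m : ℕ) := hb
        _ = 1 / (2 * m) := by push_cast; ring
    calc ‖z - z * kseq m‖ ^ 2
        = ‖u ^ m * ((star z * z : A) : Unitization ℂ A) * u ^ m‖ := by rw [e1, e2]
      _ ≤ ‖u ^ m * ((y : A) : Unitization ℂ A) * u ^ m‖ :=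
          CStarAlgebra.norm_le_norm_of_nonneg_of_le e35 e3
      _ = M * ‖u ^ (2 * m) - u ^ (2 * m + 1)‖ := by
          rw [e4, norm_smul, Real.norm_eq_abs, abs_of_pos hMpos]
      _ ≤ M * (1 / (2 * m)) := by
          exact mul_le_mul_of_nonneg_left e5 hMpos.le
      _ = M / (2 * m) := by ring
  -- conclude
  rw [← hScl.closure_eq, Metric.mem_closure_iff]
  intro ε hε
  obtain ⟨m₀, hm₀⟩ := exists_nat_gt (M / (2 * ε ^ 2))
  set m := m₀ + 1
  have hm1 : 1 ≤ m := Nat.le_add_left 1 m₀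
  have hmest := hest m hm1
  have hmR : M / (2 * ε ^ 2) < m := by
    calc M / (2 * ε ^ 2) < m₀ := hm₀
      _ ≤ m := by exact_mod_cast Nat.le_succ m₀
  have hlt : ‖z - z * kseq m‖ ^ 2 < ε ^ 2 := by
    have hmpos : (0:ℝ) < m := by positivity
    have : M / (2 * m) < ε ^ 2 := by
      rw [div_lt_iff₀ (by positivity)]
      rw [div_lt_iff₀ (by positivity)] at hmR
      nlinarith
    linarith
  refine ⟨z * kseq m, hS _ (hkK m), ?_⟩
  rw [dist_eq_norm]
  nlinarith [norm_nonneg (z - z * kseq m), hε]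

open Unitization in
lemma sq_le_norm_smul {x : A} (hx : 0 ≤ x) : x * x ≤ ‖x‖ • x := by
  have hxsa : IsSelfAdjoint x := .of_nonneg hx
  have hxu : (0 : Unitization ℂ A) ≤ (x : Unitization ℂ A) := inr_nonneg_iff.mpr hx
  have hxxsa : IsSelfAdjoint (x * x) := by
    rw [IsSelfAdjoint, star_mul, hxsa.star_eq]
  have hsxsa : IsSelfAdjoint (‖x‖ • x) := by
    rw [IsSelfAdjoint, ← Complex.coe_smul, star_smul, Complex.star_def, Complex.conj_ofReal,
      hxsa.star_eq]
  rw [← Unitization.inr_le_iff _ _ hxxsa hsxsa, inr_mul ℂ, inr_smul ℂ]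
  calc (x : Unitization ℂ A) * x = cfc (fun t : ℝ => t ^ 2) (x : Unitization ℂ A) := by
        rw [cfc_pow_id (x : Unitization ℂ A) 2, sq]
    _ ≤ cfc (fun t : ℝ => ‖x‖ * t) (x : Unitization ℂ A) := by
        refine cfc_mono (fun t ht => ?_) (by fun_prop) (by fun_prop)
        have ht0 : 0 ≤ t := spectrum_nonneg_of_nonneg hxu ht
        have ht1 : t ≤ ‖x‖ := by
          have := spectrum.norm_le_norm_of_mem ht
          rwa [Real.norm_eq_abs, abs_of_nonneg ht0, Unitization.norm_inr] at this
        nlinarith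
    _ = ‖x‖ • (x : Unitization ℂ A) := cfc_const_mul_id _ _

lemma hered {B K : Set A} (hBsm : ∀ (c : ℂ), ∀ x ∈ B, c • x ∈ B)
    (hAU : ContainsApproxUnit B) (hK : IsIdealIn B K) {x y : A}
    (hxB : x ∈ B) (hx0 : 0 ≤ x) (hxy : x ≤ y) (hyK : y ∈ K) : x ∈ K := by
  have hy0 : 0 ≤ y := hx0.trans hxy
  have h1 : star x * x ≤ ‖x‖ • y := by
    rw [(IsSelfAdjoint.of_nonneg hx0).star_eq]
    refine (sq_le_norm_smul hx0).trans ?_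
    rw [← sub_nonneg, ← smul_sub]
    exact rsmul_nonneg (norm_nonneg x) (sub_nonneg.mpr hxy)
  exact key_approx hBsm hAU hK (K_smul_real hBsm hAU hK _ hyK)
    (rsmul_nonneg (norm_nonneg x) hy0) h1 (fun k hk => (hK.2.2.2.1 x hxB k hk).1) hK.2.2.2.2

/-- If `K` is an `N`-invariant closed ideal of `B`, then
`J_K = {a ∈ A : E(a*a) ∈ K}` is a closed two-sided ideal of `A` with `J_K ∩ B = K`. -/
theorem JK_isIdeal {B N : Set A} (hB : IsRegularInclusion B)
    (hN : IsNormalizerSemigroup B N) (E : A → A) (hE : IsCondExp B E)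
    (hEf : IsFaithful E) (hEinv : IsInvariantCondExp N E)
    (K : Set A) (hK : IsIdealIn B K) (hKinv : InvariantUnder N K) :
    IsIdeal {a : A | E (star a * a) ∈ K} ∧ {a : A | E (star a * a) ∈ K} ∩ B = K := by
  obtain ⟨⟨⟨hB0, hBadd, hBmul, hBsm, hBstar, hBcl⟩, hAU⟩, hreg⟩ := hB
  obtain ⟨hNnorm, hNstar, hNmul, hNdense⟩ := hN
  obtain ⟨hEB, hEid, hEadd, hEsmul, hEpos, hEnorm, hEmod⟩ := hE
  obtain ⟨hKB, hK0, hKadd, hKmul, hKcl⟩ := hK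
  have hKi : IsIdealIn B K := ⟨hKB, hK0, hKadd, hKmul, hKcl⟩
  set J := {a : A | E (star a * a) ∈ K} with hJ
  have hE0 : E 0 = 0 := by simpa using hEsmul 0 0
  have hEneg : ∀ x, E (-x) = - E x := by
    intro x
    have h := hEsmul (-1) x
    rw [neg_one_smul, neg_one_smul] at h
    exact h
  have hEsub : ∀ x y, E (x - y) = E x - E y := by
    intro x y
    rw [sub_eq_add_neg, hEadd, hEneg, sub_eq_add_neg]
  have hEmono : ∀ {x y : A}, x ≤ y → E x ≤ E y := by
    intro x y h
    have h2 := hEpos _ (sub_nonneg.mpr h)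
    rw [hEsub] at h2
    exact sub_nonneg.mp h2
  have hEcont : Continuous E := by
    have hlip : LipschitzWith 1 E := by
      apply LipschitzWith.of_dist_le_mul
      intro a b
      rw [dist_eq_norm, dist_eq_norm, ← hEsub]
      simpa using hEnorm (a - b)
    exact hlip.continuous
  have hJ0 : (0 : A) ∈ J := by
    show E (star (0:A) * 0) ∈ K
    rw [mul_zero, hE0]
    exact hK0
  have hJcl : IsClosed J := by
    have hJpre : J = (fun a => E (star a * a)) ⁻¹' K := rfl
    rw [hJpre]
    exact hKcl.preimage (hEcont.comp (continuous_star.mul continuous_id))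
  have hered' : ∀ {w v : A}, w ∈ B → 0 ≤ w → w ≤ v → v ∈ K → w ∈ K :=
    fun hwB hw0 hwv hvK => hered hBsm hAU hKi hwB hw0 hwv hvK
  have hJadd : ∀ x ∈ J, ∀ y ∈ J, x + y ∈ J := by
    intro a ha b hb
    have hident : star (a + b) * (a + b) + star (a - b) * (a - b)
        = star a * a + star a * a + star b * b + star b * b := by
      rw [star_add, star_sub]
      noncomm_ring
    have hle : star (a + b) * (a + b)
        ≤ star a * a + star a * a + star b * b + star b * b := by
      rw [← hident]
      exact le_add_of_nonneg_right (star_mul_self_nonneg _)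
    have hEle := hEmono hle
    rw [hEadd, hEadd, hEadd] at hEle
    exact hered' (hEB _) (hEpos _ (star_mul_self_nonneg _)) hEle
      (hKadd _ (hKadd _ (hKadd _ ha _ ha) _ hb) _ hb)
  have hJsmul : ∀ (c : ℂ), ∀ x ∈ J, c • x ∈ J := by
    intro c x hx
    have hident : star (c • x) * (c • x) = (star c * c) • (star x * x) := by
      rw [star_smul, smul_mul_smul_comm]
    show E (star (c • x) * (c • x)) ∈ K
    rw [hident, hEsmul]
    exact K_smul hBsm hAU hKi _ hx
  have hJleft : ∀ (a : A), ∀ x ∈ J, a * x ∈ J := by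
    intro a x hx
    have h1 : star (a * x) * (a * x) = star x * (star a * a) * x := by
      rw [star_mul]
      noncomm_ring
    have h2 : star x * (star a * a) * x ≤ ‖star a * a‖ • (star x * x) :=
      CStarAlgebra.star_left_conjugate_le_norm_smul (IsSelfAdjoint.star_mul_self a)
    have h3 := hEmono h2
    rw [← Complex.coe_smul, hEsmul, Complex.coe_smul] at h3
    show E (star (a * x) * (a * x)) ∈ K
    rw [h1]
    exact hered' (hEB _) (hEpos _ (h1 ▸ star_mul_self_nonneg (a * x)))
      h3 (K_smul_real hBsm hAU hKi _ hx)
  have hJrightN : ∀ x ∈ J, ∀ n ∈ N, x * n ∈ J := by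
    intro x hx n hn
    have h1 : star (x * n) * (x * n) = star n * (star x * x) * n := by
      rw [star_mul]
      simp [mul_assoc]
    have h2 := hEinv (star n) (hNstar n hn) (star x * x)
    rw [star_star] at h2
    show E (star (x * n) * (x * n)) ∈ K
    rw [h1, h2]
    have h3 := hKinv (star n) (hNstar n hn) _ hx
    rwa [star_star] at h3
  have hJright : ∀ x ∈ J, ∀ (a : A), x * a ∈ J := by
    intro x hx a
    have hspan : ∀ m ∈ (Submodule.span ℂ N : Submodule ℂ A), x * m ∈ J := by
      intro m hm
      induction hm using Submodule.span_induction with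
      | mem n hn => exact hJrightN x hx n hn
      | zero => rw [mul_zero]; exact hJ0
      | add p q hp hq ihp ihq => rw [mul_add]; exact hJadd _ ihp _ ihq
      | smul c p hp ihp => rw [mul_smul_comm]; exact hJsmul c _ ihp
    have ha : a ∈ closure (Submodule.span ℂ N : Set A) := by
      rw [hNdense]
      trivial
    have hmem := map_mem_closure (f := fun m => x * m)
      (continuous_const.mul continuous_id) ha (fun m hm => hspan m hm)
    rwa [hJcl.closure_eq] at hmem
  refine ⟨⟨⟨hJ0, hJadd, fun a x hx => ⟨hJleft a x hx, hJright x hx a⟩⟩, hJcl⟩, ?_⟩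
  apply Set.Subset.antisymm
  · rintro b ⟨hbJ, hbB⟩
    have hbb : star b * b ∈ B := hBmul _ (hBstar b hbB) _ hbB
    have heq : E (star b * b) = star b * b := hEid _ hbb
    have hbbK : star b * b ∈ K := by rw [← heq]; exact hbJ
    exact key_approx hBsm hAU hKi hbbK (star_mul_self_nonneg b) le_rfl
      (fun k hk => (hKmul b hbB k hk).1) hKcl
  · intro k hk
    refine ⟨?_, hKB hk⟩
    show E (star k * k) ∈ K
    have h1 : star k * k ∈ K := (hKmul _ (hBstar k (hKB hk)) _ hk).1
    rw [hEid _ (hKB h1)]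
    exact h1
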